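/- Among all spanning trees used for one-port pipelined broadcast of m packets to n nodes, the completion time is at least max(⌈log₂ n⌉, m), and a schedule achieving O(m + log n) exists. -/

import Mathlib

/-- One-port pipelined broadcast of `m` packets from source `s` among `n`
nodes: `P t v` is the set of packets held by node `v` after round `t`.
Initially the source holds all packets and everyone else none; in each round
every node may send one packet it holds to one other node. -/
def IsPipelinedBroadcast (n m : ℕ) (s : Fin n)
    (P : ℕ → Fin n → Set (Fin m)) : Prop :=
  P 0 s = Set.univ ∧ (∀ v, v ≠ s → P 0 v = ∅) ∧
  ∀ t, ∃ send : Fin n → Option (Fin n × Fin m),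
    (∀ u v q, send u = some (v, q) → q ∈ P t u) ∧
    (∀ v, P (t + 1) v = P t v ∪ {q | ∃ u, send u = some (v, q)})

/-- Arrival time of packet `q` at node `v` in the pipelined binary-tree
broadcast schedule. -/
def bcastA (v q : ℕ) : ℕ :=
  if v = 0 then 0 else 2 * Nat.log 2 (v + 1) + 2 * q + (if v % 2 = 0 then 1 else 0)

lemma log_child (u k : ℕ) (hk : k = 2 ∨ k = 3) :
    Nat.log 2 (2 * u + k) = Nat.log 2 (u + 1) + 1 := by
  set D := Nat.log 2 (u + 1) with hD
  have h1 : 2 ^ D ≤ u + 1 := Nat.pow_log_le_self 2 (by omega)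
  have h2 : u + 1 < 2 ^ (D + 1) := Nat.lt_pow_succ_log_self one_lt_two _
  apply Nat.log_eq_of_pow_le_of_lt_pow
  · have : 2 ^ (D + 1) = 2 * 2 ^ D := by ring
    omega
  · have : 2 ^ (D + 1 + 1) = 2 * 2 ^ (D + 1) := by ring
    omega

lemma bcastA_odd (u q : ℕ) : bcastA (2 * u + 1) q = 2 * (Nat.log 2 (u + 1) + 1) + 2 * q := by
  have h := log_child u 2 (Or.inl rfl)
  unfold bcastA
  rw [if_neg (by omega), if_neg (by omega)]
  have : 2 * u + 1 + 1 = 2 * u + 2 := by ring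
  rw [this, h]
  ring

lemma bcastA_even (u q : ℕ) :
    bcastA (2 * u + 2) q = 2 * (Nat.log 2 (u + 1) + 1) + 2 * q + 1 := by
  have h := log_child u 3 (Or.inr rfl)
  unfold bcastA
  rw [if_neg (by omega), if_pos (by omega)]
  have : 2 * u + 2 + 1 = 2 * u + 3 := by ring
  rw [this, h]

lemma bcastA_le (v q : ℕ) : bcastA v q ≤ 2 * Nat.log 2 (v + 1) + 2 * q + 1 := by
  unfold bcastA
  split <;> [omega; (split <;> omega)]

lemma bcastA_pos (v q : ℕ) (hv : v ≠ 0) : 2 ≤ bcastA v q := by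
  have h : 0 < Nat.log 2 (v + 1) := Nat.log_pos one_lt_two (by omega)
  unfold bcastA
  rw [if_neg hv]
  omega

lemma bcastA_inj (u c c' q q' : ℕ) (hc : c ≠ 0) (hc' : c' ≠ 0)
    (h1 : (c - 1) / 2 = u) (h2 : (c' - 1) / 2 = u)
    (h3 : bcastA c q = bcastA c' q') : c = c' ∧ q = q' := by
  have hcc : c = 2 * u + 1 ∨ c = 2 * u + 2 := by omega
  have hcc' : c' = 2 * u + 1 ∨ c' = 2 * u + 2 := by omega
  rcases hcc with h | h <;> rcases hcc' with h' | h' <;> subst h h' <;>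
    simp only [bcastA_odd, bcastA_even] at h3 <;> omega

lemma bcastA_parent (c q : ℕ) (hc : c ≠ 0) :
    bcastA ((c - 1) / 2) q + 1 ≤ bcastA c q := by
  set p := (c - 1) / 2 with hp
  have hc2 : c = 2 * p + 1 ∨ c = 2 * p + 2 := by omega
  have hle : bcastA p q ≤ 2 * Nat.log 2 (p + 1) + 2 * q + 1 := bcastA_le p q
  by_cases hp0 : p = 0
  · have : bcastA p q = 0 := by rw [hp0]; rfl
    rcases hc2 with h | h <;> rw [h] <;> simp only [bcastA_odd, bcastA_even] <;> omega
  · have h2 : 0 < Nat.log 2 (p + 1) := Nat.log_pos one_lt_two (by omega)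
    have hge : 2 * Nat.log 2 (p + 1) + 2 * q ≤ bcastA p q := by
      unfold bcastA; rw [if_neg hp0]; split <;> omega
    rcases hc2 with h | h <;> rw [h] <;> simp only [bcastA_odd, bcastA_even] <;> omega

/-- Completion time of one-port pipelined broadcast of `m` packets to `n`
nodes is at least `max ⌈log₂ n⌉ m`, and a schedule finishing in `O(m + log n)`
rounds exists. -/
theorem stmt15 :
    (∀ (n m : ℕ), 2 ≤ n → 1 ≤ m → ∀ (s : Fin n)
      (P : ℕ → Fin n → Set (Fin m)) (T : ℕ), IsPipelinedBroadcast n m s P →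
      (∀ v, P T v = Set.univ) → max (Nat.clog 2 n) m ≤ T) ∧
    (∃ C : ℕ, ∀ (n m : ℕ), 2 ≤ n → 1 ≤ m →
      ∃ (s : Fin n) (P : ℕ → Fin n → Set (Fin m)) (T : ℕ),
        IsPipelinedBroadcast n m s P ∧ (∀ v, P T v = Set.univ) ∧
        T ≤ C * (m + Nat.clog 2 n)) := by
  constructor
  · -- Lower bound
    intro n m hn hm s P T hbc hdone
    obtain ⟨h0s, h0v, hstep⟩ := hbc
    choose send hsend1 hsend2 using hstep
    apply max_le
    · -- clog 2 n ≤ T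
      set N : ℕ → Set (Fin n) := fun t => {v | (P t v).Nonempty} with hN
      have hN0 : N 0 ⊆ {s} := by
        intro v hv
        by_contra hvs
        have : v ≠ s := by simpa using hvs
        have := h0v v this
        simp only [hN, Set.mem_setOf_eq, this] at hv
        exact Set.not_nonempty_empty hv
      have hdouble : ∀ t, (N (t + 1)).ncard ≤ 2 * (N t).ncard := by
        intro t
        classical
        set f : Fin n → Fin n := fun v =>
          if h : ∃ u q, send t u = some (v, q) then h.choose else v with hf
        have hdiff : (N (t + 1) \ N t).ncard ≤ (N t).ncard := by
          apply Set.ncard_le_ncard_of_injOn f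
          · rintro v ⟨hv1, hv2⟩
            obtain ⟨q, hq⟩ := hv1
            rw [hsend2 t v] at hq
            rcases hq with hq | ⟨u, hu⟩
            · exact absurd ⟨q, hq⟩ hv2
            · have hex : ∃ u q, send t u = some (v, q) := ⟨u, q, hu⟩
              obtain ⟨q', hq'⟩ := hex.choose_spec
              have : f v = hex.choose := by rw [hf]; exact dif_pos hex
              rw [this]
              exact ⟨q', hsend1 t _ _ _ hq'⟩
          · rintro v ⟨hv1, hv2⟩ v' ⟨hv1', hv2'⟩ hvv
            obtain ⟨q, hq⟩ := hv1
            rw [hsend2 t v] at hq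
            rcases hq with hq | ⟨u, hu⟩
            · exact absurd ⟨q, hq⟩ hv2
            obtain ⟨q', hq'⟩ := hv1'
            rw [hsend2 t v'] at hq'
            rcases hq' with hq' | ⟨u', hu'⟩
            · exact absurd ⟨q', hq'⟩ hv2'
            have hex : ∃ u q, send t u = some (v, q) := ⟨u, q, hu⟩
            have hex' : ∃ u q, send t u = some (v', q) := ⟨u', q', hu'⟩
            have e1 : f v = hex.choose := by rw [hf]; exact dif_pos hex
            have e2 : f v' = hex'.choose := by rw [hf]; exact dif_pos hex'
            obtain ⟨qa, hqa⟩ := hex.choose_spec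
            obtain ⟨qb, hqb⟩ := hex'.choose_spec
            rw [e1, e2] at hvv
            rw [hvv] at hqa
            rw [hqa] at hqb
            exact congrArg Prod.fst (Option.some_injective _ hqb)
        have hsub : N (t + 1) ⊆ N t ∪ (N (t + 1) \ N t) := by
          intro v hv
          by_cases h : v ∈ N t
          · exact Or.inl h
          · exact Or.inr ⟨hv, h⟩
        calc (N (t + 1)).ncard ≤ (N t ∪ (N (t + 1) \ N t)).ncard :=
              Set.ncard_le_ncard hsub
          _ ≤ (N t).ncard + (N (t + 1) \ N t).ncard := Set.ncard_union_le _ _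
          _ ≤ 2 * (N t).ncard := by omega
      have hcard : ∀ t, (N t).ncard ≤ 2 ^ t := by
        intro t
        induction t with
        | zero =>
          simpa using Set.ncard_le_ncard hN0
        | succ t ih =>
          have := hdouble t
          have h2 : 2 ^ (t + 1) = 2 * 2 ^ t := by ring
          omega
      have hNT : N T = Set.univ := by
        ext v
        simp only [hN, Set.mem_setOf_eq, Set.mem_univ, iff_true, hdone v]
        exact ⟨⟨0, by omega⟩, Set.mem_univ _⟩
      have hn2 : n ≤ 2 ^ T := by
        have := hcard T
        rw [hNT] at this
        simpa [Set.ncard_univ] using this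
      exact (Nat.clog_le_iff_le_pow one_lt_two).mpr hn2
    · -- m ≤ T
      set Q : ℕ → Set (Fin m) := fun t => {q | ∃ v, v ≠ s ∧ q ∈ P t v} with hQ
      have hQ0 : Q 0 = ∅ := by
        ext q
        simp only [hQ, Set.mem_setOf_eq, Set.mem_empty_iff_false, iff_false]
        rintro ⟨v, hv, hq⟩
        rw [h0v v hv] at hq
        exact hq
      have hstepQ : ∀ t, (Q (t + 1)).ncard ≤ (Q t).ncard + 1 := by
        intro t
        set S : Set (Fin m) := (send t s).elim ∅ (fun p => {p.2}) with hS
        have hsub : Q (t + 1) ⊆ Q t ∪ S := by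
          rintro q ⟨v, hv, hq⟩
          rw [hsend2 t v] at hq
          rcases hq with hq | ⟨u, hu⟩
          · exact Or.inl ⟨v, hv, hq⟩
          by_cases hus : u = s
          · right
            rw [hus] at hu
            show q ∈ (send t s).elim ∅ (fun p => {p.2})
            rw [hu]
            exact rfl
          · exact Or.inl ⟨u, hus, hsend1 t _ _ _ hu⟩
        have hScard : S.ncard ≤ 1 := by
          rw [hS]
          cases send t s with
          | none => simp
          | some p => simp
        calc (Q (t + 1)).ncard ≤ (Q t ∪ S).ncard := Set.ncard_le_ncard hsub
          _ ≤ (Q t).ncard + S.ncard := Set.ncard_union_le _ _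
          _ ≤ (Q t).ncard + 1 := by omega
      have hcard : ∀ t, (Q t).ncard ≤ t := by
        intro t
        induction t with
        | zero => simp [hQ0]
        | succ t ih => have := hstepQ t; omega
      have hQT : Q T = Set.univ := by
        ext q
        simp only [hQ, Set.mem_setOf_eq, Set.mem_univ, iff_true]
        have : ∃ v : Fin n, v ≠ s := by
          by_cases h0 : s = ⟨0, by omega⟩
          · refine ⟨⟨1, by omega⟩, fun h => ?_⟩
            rw [h0] at h
            simpa using congrArg Fin.val h
          · exact ⟨⟨0, by omega⟩, fun h => h0 h.symm⟩
        obtain ⟨v, hv⟩ := this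
        exact ⟨v, hv, by rw [hdone v]; trivial⟩
      have := hcard T
      rw [hQT] at this
      simpa [Set.ncard_univ] using this
  · -- Upper bound: pipelined binary-tree broadcast
    refine ⟨2, ?_⟩
    intro n m hn hm
    classical
    refine ⟨⟨0, by omega⟩, fun t v => {q | bcastA v q ≤ t}, 2 * (m + Nat.clog 2 n),
      ⟨?_, ?_, ?_⟩, ?_, le_refl _⟩
    · ext q
      simp [bcastA]
    · intro v hv
      have hv0 : (v : ℕ) ≠ 0 := fun h => hv (Fin.ext h)
      ext q
      simp only [Set.mem_setOf_eq, Set.mem_empty_iff_false, iff_false, not_le]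
      have := bcastA_pos v q hv0
      omega
    · intro t
      set send : Fin n → Option (Fin n × Fin m) := fun u =>
        if h : ∃ cq : Fin n × Fin m, (cq.1 : ℕ) ≠ 0 ∧ ((cq.1 : ℕ) - 1) / 2 = (u : ℕ) ∧
            bcastA cq.1 cq.2 = t + 1 then some h.choose else none with hsend
      have hkey : ∀ u v q, send u = some (v, q) →
          (v : ℕ) ≠ 0 ∧ ((v : ℕ) - 1) / 2 = (u : ℕ) ∧ bcastA v q = t + 1 := by
        intro u v q h
        simp only [hsend] at h
        by_cases hex : ∃ cq : Fin n × Fin m, (cq.1 : ℕ) ≠ 0 ∧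
            ((cq.1 : ℕ) - 1) / 2 = (u : ℕ) ∧ bcastA cq.1 cq.2 = t + 1
        · rw [dif_pos hex] at h
          have hch := hex.choose_spec
          rw [Option.some_injective _ h] at hch
          exact hch
        · rw [dif_neg hex] at h
          exact absurd h (by simp)
      refine ⟨send, ?_, ?_⟩
      · intro u v q h
        obtain ⟨hv0, hpar, harr⟩ := hkey u v q h
        have := bcastA_parent v q hv0
        rw [hpar] at this
        simp only [Set.mem_setOf_eq]
        omega
      · intro v
        ext q
        simp only [Set.mem_setOf_eq, Set.mem_union]
        constructor
        · intro h
          by_cases hle : bcastA v q ≤ t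
          · exact Or.inl hle
          have heq : bcastA v q = t + 1 := by omega
          have hv0 : (v : ℕ) ≠ 0 := by
            intro h0
            have : bcastA v q = 0 := by rw [h0]; rfl
            omega
          right
          have hult : ((v : ℕ) - 1) / 2 < n := by
            have := v.isLt
            omega
          refine ⟨⟨((v : ℕ) - 1) / 2, hult⟩, ?_⟩
          have hex : ∃ cq : Fin n × Fin m, (cq.1 : ℕ) ≠ 0 ∧
              ((cq.1 : ℕ) - 1) / 2 = (((⟨((v : ℕ) - 1) / 2, hult⟩ : Fin n)) : ℕ) ∧
              bcastA cq.1 cq.2 = t + 1 := ⟨(v, q), hv0, rfl, heq⟩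
          simp only [hsend]
          rw [dif_pos hex]
          obtain ⟨hc0, hcp, hca⟩ := hex.choose_spec
          have hinj := bcastA_inj (((v : ℕ) - 1) / 2) _ _ _ _ hc0 hv0 hcp rfl
            (by rw [hca, heq])
          have h1 : hex.choose.1 = v := Fin.ext hinj.1
          have h2 : hex.choose.2 = q := Fin.ext hinj.2
          rw [show hex.choose = (v, q) from Prod.ext h1 h2]
        · rintro (h | ⟨u, hu⟩)
          · omega
          · have := (hkey u v q hu).2.2
            omega
    · intro v
      ext q
      simp only [Set.mem_setOf_eq, Set.mem_univ, iff_true]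
      by_cases hv0 : (v : ℕ) = 0
      · have : bcastA v q = 0 := by rw [hv0]; rfl
        omega
      · have h1 := bcastA_le v q
        have h2 : Nat.log 2 ((v : ℕ) + 1) ≤ Nat.log 2 n :=
          Nat.log_mono_right (by have := v.isLt; omega)
        have h3 : Nat.log 2 n ≤ Nat.clog 2 n := Nat.log_le_clog 2 n
        have h4 : (q : ℕ) < m := q.isLt
        omega
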